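/- Let G = K₄ with any orientation D and let β: V(G) → ℤ₄ be the constant function with value 1 (which is a zero-sum boundary function). Then for any mapping φ: E(G) → ℤ₄∖{0} with ∂φ = β, there exists a vertex v of G such that every edge e incident with v is either directed into v with φ(e) = 1 or directed away from v with φ(e) = 3. -/

import Mathlib

open Finset

/-- A finite loopless multigraph: each edge `e` has two distinct endpoints
`fst e` and `snd e` (this pair serves as a reference orientation). -/
structure Multigraph (V : Type) (E : Type) where
  fst : E → V
  snd : E → V
  loopless : ∀ e, fst e ≠ snd e

namespace Multigraph

variable {V E : Type}

/-- The head of edge `e` under the orientation `o` (a Boolean switch per edge). -/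
def head (G : Multigraph V E) (o : E → Bool) (e : E) : V :=
  if o e then G.fst e else G.snd e

/-- The tail of edge `e` under the orientation `o`. -/
def tail (G : Multigraph V E) (o : E → Bool) (e : E) : V :=
  if o e then G.snd e else G.fst e

/-- The boundary `∂φ(u)`: sum of `φ` over edges directed out of `u`
minus the sum over edges directed into `u`.  (An edge is directed out of
its tail and into its head.) -/
def boundary [Fintype E] [DecidableEq V] {S : Type} [AddCommGroup S]
    (G : Multigraph V E) (o : E → Bool) (φ : E → S) (u : V) : S :=
  (∑ e : E, if G.tail o e = u then φ e else 0)
    - ∑ e : E, if G.head o e = u then φ e else 0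

/-- `G` is `S`-connected: every zero-sum boundary function is realized by a
nowhere-zero mapping under some orientation. -/
def GroupConnected [Fintype V] [Fintype E] [DecidableEq V]
    (G : Multigraph V E) (S : Type) [AddCommGroup S] : Prop :=
  ∀ β : V → S, ∑ v : V, β v = 0 →
    ∃ (o : E → Bool) (φ : E → S), (∀ e, φ e ≠ 0) ∧ ∀ u, G.boundary o φ u = β u

/-- Degree of a vertex: number of edge-ends at it. -/
def degree [Fintype E] [DecidableEq V] (G : Multigraph V E) (v : V) : ℕ :=
  (univ.filter fun e => G.fst e = v).card + (univ.filter fun e => G.snd e = v).card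

/-- Adjacency via some edge. -/
def Adj (G : Multigraph V E) (u v : V) : Prop :=
  ∃ e, (G.fst e = u ∧ G.snd e = v) ∨ (G.fst e = v ∧ G.snd e = u)

/-- Connectivity of a multigraph. -/
def Connected (G : Multigraph V E) : Prop :=
  Nonempty V ∧ ∀ u v : V, Relation.ReflTransGen G.Adj u v

/-- Delete a set of edges. -/
def deleteEdges (G : Multigraph V E) (F : Set E) : Multigraph V {e : E // e ∉ F} where
  fst e := G.fst e.1
  snd e := G.snd e.1
  loopless e := G.loopless e.1

/-- `G` has edge-connectivity at least `k`. -/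
def EdgeConnAtLeast (G : Multigraph V E) (k : ℕ) : Prop :=
  ∀ F : Finset E, F.card < k → (G.deleteEdges ↑F).Connected

/-- Orientation-free boundary, suitable for groups of exponent 2. -/
def ubnd [Fintype E] [DecidableEq V] {S : Type} [AddCommGroup S]
    (G : Multigraph V E) (φ : E → S) (v : V) : S :=
  ∑ e : E, ((if G.fst e = v then φ e else 0) + (if G.snd e = v then φ e else 0))

/-- The subgraph with vertex set `R` and edge set `F`. -/
def restrict (G : Multigraph V E) (R : Set V) (F : Set E)
    (hF : ∀ e ∈ F, G.fst e ∈ R ∧ G.snd e ∈ R) : Multigraph R F where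
  fst e := ⟨G.fst e.1, (hF e.1 e.2).1⟩
  snd e := ⟨G.snd e.1, (hF e.1 e.2).2⟩
  loopless e h := G.loopless e.1 (congrArg Subtype.val h)

end Multigraph


section K4aux

lemma hE01 : (((0:Fin 4),(1:Fin 4)) : Fin 4 × Fin 4).1 < ((0,1) : Fin 4 × Fin 4).2 := by decide
lemma hE02 : (((0:Fin 4),(2:Fin 4)) : Fin 4 × Fin 4).1 < ((0,2) : Fin 4 × Fin 4).2 := by decide
lemma hE03 : (((0:Fin 4),(3:Fin 4)) : Fin 4 × Fin 4).1 < ((0,3) : Fin 4 × Fin 4).2 := by decide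
lemma hE12 : (((1:Fin 4),(2:Fin 4)) : Fin 4 × Fin 4).1 < ((1,2) : Fin 4 × Fin 4).2 := by decide
lemma hE13 : (((1:Fin 4),(3:Fin 4)) : Fin 4 × Fin 4).1 < ((1,3) : Fin 4 × Fin 4).2 := by decide
lemma hE23 : (((2:Fin 4),(3:Fin 4)) : Fin 4 × Fin 4).1 < ((2,3) : Fin 4 × Fin 4).2 := by decide

def aE01 : {p : Fin 4 × Fin 4 // p.1 < p.2} := ⟨(0,1), hE01⟩
def aE02 : {p : Fin 4 × Fin 4 // p.1 < p.2} := ⟨(0,2), hE02⟩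
def aE03 : {p : Fin 4 × Fin 4 // p.1 < p.2} := ⟨(0,3), hE03⟩
def aE12 : {p : Fin 4 × Fin 4 // p.1 < p.2} := ⟨(1,2), hE12⟩
def aE13 : {p : Fin 4 × Fin 4 // p.1 < p.2} := ⟨(1,3), hE13⟩
def aE23 : {p : Fin 4 × Fin 4 // p.1 < p.2} := ⟨(2,3), hE23⟩

lemma sumE {M : Type} [AddCommMonoid M] (f : {p : Fin 4 × Fin 4 // p.1 < p.2} → M) :
    ∑ e, f e = f aE01 + f aE02 + f aE03 + f aE12 + f aE13 + f aE23 := by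
  rw [show (univ : Finset {p : Fin 4 × Fin 4 // p.1 < p.2})
      = {aE01, aE02, aE03, aE12, aE13, aE23} from by decide]
  rw [show ({aE01, aE02, aE03, aE12, aE13, aE23} : Finset {p : Fin 4 × Fin 4 // p.1 < p.2})
      = ⟨[aE01, aE02, aE03, aE12, aE13, aE23], by decide⟩ from by decide]
  simp [Finset.sum_mk, add_assoc]

lemma forallE (P : {p : Fin 4 × Fin 4 // p.1 < p.2} → Prop)
    (h : P aE01 ∧ P aE02 ∧ P aE03 ∧ P aE12 ∧ P aE13 ∧ P aE23) : ∀ e, P e := by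
  have hc : ∀ e : {p : Fin 4 × Fin 4 // p.1 < p.2},
      e = aE01 ∨ e = aE02 ∨ e = aE03 ∨ e = aE12 ∨ e = aE13 ∨ e = aE23 := by decide
  intro e
  rcases hc e with rfl | rfl | rfl | rfl | rfl | rfl <;> tauto

lemma iteFin (b : Bool) (c d u : Fin 4) (x : ZMod 4) :
    (if (if b then c else d) = u then x else 0)
      = (if c = u then (if b then x else 0) else 0) + (if d = u then (if b then 0 else x) else 0) := by
  cases b <;> by_cases hc : c = u <;> by_cases hd : d = u <;> simp [hc, hd]

lemma subIte (b : Bool) (x : ZMod 4) :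
    (if b then (0 : ZMod 4) else x) - (if b then x else 0) = (if b then -x else x) := by
  cases b <;> simp

lemma negIff3 (x : ZMod 4) : -x = 3 ↔ x = 1 := by revert x; decide
lemma negIff1 (x : ZMod 4) : -x = 1 ↔ x = 3 := by revert x; decide

lemma pairIff (b : Bool) (x : ZMod 4) (p q v : Fin 4) :
    (((if b then p else q) = v → x = 1) ∧ ((if b then q else p) = v → x = 3)) ↔
      ((p = v → (if b then -x else x) = 3) ∧ (q = v → (if b then -x else x) = 1)) := by
  cases b
  · simp only [if_neg Bool.false_ne_true, Bool.false_eq_true, ite_false]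
    exact and_comm
  · simp only [ite_true, negIff3, negIff1]

set_option synthInstance.maxSize 2000 in
set_option synthInstance.maxHeartbeats 2000000 in
set_option maxRecDepth 10000 in
set_option maxHeartbeats 4000000 in
lemma ycore : ∀ (y1 y2 y3 y4 y5 y6 : ZMod 4),
    y1 ≠ 0 → y2 ≠ 0 → y3 ≠ 0 → y4 ≠ 0 → y5 ≠ 0 → y6 ≠ 0 →
    y1 + y2 + y3 = 1 → -y1 + y4 + y5 = 1 → -y2 - y4 + y6 = 1 → -y3 - y5 - y6 = 1 →
    ∃ v : Fin 4,
      (((0 : Fin 4) = v → y1 = 3) ∧ ((1 : Fin 4) = v → y1 = 1)) ∧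
      (((0 : Fin 4) = v → y2 = 3) ∧ ((2 : Fin 4) = v → y2 = 1)) ∧
      (((0 : Fin 4) = v → y3 = 3) ∧ ((3 : Fin 4) = v → y3 = 1)) ∧
      (((1 : Fin 4) = v → y4 = 3) ∧ ((2 : Fin 4) = v → y4 = 1)) ∧
      (((1 : Fin 4) = v → y5 = 3) ∧ ((3 : Fin 4) = v → y5 = 1)) ∧
      (((2 : Fin 4) = v → y6 = 3) ∧ ((3 : Fin 4) = v → y6 = 1)) := by
  decide

end K4aux

/-- The complete graph `K₄` on four vertices. -/
def K4 : Multigraph (Fin 4) {p : Fin 4 × Fin 4 // p.1 < p.2} where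
  fst e := e.1.1
  snd e := e.1.2
  loopless e := ne_of_lt e.2

/-- for any orientation and nowhere-zero `φ : E(K₄) → ℤ₄` whose boundary is
the constant boundary function `1`, some vertex `v` has all its incident edges either
directed into `v` with value `1` or directed away from `v` with value `3`. -/
theorem K4_constant_one_boundary (o : {p : Fin 4 × Fin 4 // p.1 < p.2} → Bool)
    (φ : {p : Fin 4 × Fin 4 // p.1 < p.2} → ZMod 4) (hφ : ∀ e, φ e ≠ 0)
    (hb : ∀ u : Fin 4, K4.boundary o φ u = 1) :
    ∃ v : Fin 4, ∀ e, (K4.head o e = v → φ e = 1) ∧ (K4.tail o e = v → φ e = 3) := by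
  have hb0 := hb 0; have hb1 := hb 1; have hb2 := hb 2; have hb3 := hb 3
  have n1 := hφ aE01; have n2 := hφ aE02; have n3 := hφ aE03
  have n4 := hφ aE12; have n5 := hφ aE13; have n6 := hφ aE23
  have key : ∃ v : Fin 4,
      ((K4.head o aE01 = v → φ aE01 = 1) ∧ (K4.tail o aE01 = v → φ aE01 = 3)) ∧
      ((K4.head o aE02 = v → φ aE02 = 1) ∧ (K4.tail o aE02 = v → φ aE02 = 3)) ∧
      ((K4.head o aE03 = v → φ aE03 = 1) ∧ (K4.tail o aE03 = v → φ aE03 = 3)) ∧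
      ((K4.head o aE12 = v → φ aE12 = 1) ∧ (K4.tail o aE12 = v → φ aE12 = 3)) ∧
      ((K4.head o aE13 = v → φ aE13 = 1) ∧ (K4.tail o aE13 = v → φ aE13 = 3)) ∧
      ((K4.head o aE23 = v → φ aE23 = 1) ∧ (K4.tail o aE23 = v → φ aE23 = 3)) := by
    simp only [Multigraph.boundary, sumE, Multigraph.head, Multigraph.tail, K4,
      aE01, aE02, aE03, aE12, aE13, aE23] at hb0 hb1 hb2 hb3 n1 n2 n3 n4 n5 n6 ⊢
    delta Multigraph.head Multigraph.tail K4 aE01 aE02 aE03 aE12 aE13 aE23 at hb0 hb1 hb2 hb3 ⊢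
    revert n1 n2 n3 n4 n5 n6 hb0 hb1 hb2 hb3
    generalize o ⟨(0,1), hE01⟩ = b1
    generalize o ⟨(0,2), hE02⟩ = b2
    generalize o ⟨(0,3), hE03⟩ = b3
    generalize o ⟨(1,2), hE12⟩ = b4
    generalize o ⟨(1,3), hE13⟩ = b5
    generalize o ⟨(2,3), hE23⟩ = b6
    generalize φ ⟨(0,1), hE01⟩ = x1
    generalize φ ⟨(0,2), hE02⟩ = x2
    generalize φ ⟨(0,3), hE03⟩ = x3
    generalize φ ⟨(1,2), hE12⟩ = x4
    generalize φ ⟨(1,3), hE13⟩ = x5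
    generalize φ ⟨(2,3), hE23⟩ = x6
    intro n1 n2 n3 n4 n5 n6 hb0 hb1 hb2 hb3
    simp only [iteFin] at hb0 hb1 hb2 hb3
    simp only [Fin.reduceEq, if_true, if_false, ite_true, ite_false, add_zero, zero_add] at hb0 hb1 hb2 hb3
    have r1 := subIte b1 x1
    have r2 := subIte b2 x2
    have r3 := subIte b3 x3
    have r4 := subIte b4 x4
    have r5 := subIte b5 x5
    have r6 := subIte b6 x6
    have m1 : (if b1 then -x1 else x1) ≠ 0 := by cases b1 <;> simpa using n1
    have m2 : (if b2 then -x2 else x2) ≠ 0 := by cases b2 <;> simpa using n2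
    have m3 : (if b3 then -x3 else x3) ≠ 0 := by cases b3 <;> simpa using n3
    have m4 : (if b4 then -x4 else x4) ≠ 0 := by cases b4 <;> simpa using n4
    have m5 : (if b5 then -x5 else x5) ≠ 0 := by cases b5 <;> simpa using n5
    have m6 : (if b6 then -x6 else x6) ≠ 0 := by cases b6 <;> simpa using n6
    have g0 : (if b1 then -x1 else x1) + (if b2 then -x2 else x2) + (if b3 then -x3 else x3) = 1 := by
      linear_combination hb0 - r1 - r2 - r3
    have g1 : -(if b1 then -x1 else x1) + (if b4 then -x4 else x4) + (if b5 then -x5 else x5) = 1 := by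
      linear_combination hb1 + r1 - r4 - r5
    have g2 : -(if b2 then -x2 else x2) - (if b4 then -x4 else x4) + (if b6 then -x6 else x6) = 1 := by
      linear_combination hb2 + r2 + r4 - r6
    have g3 : -(if b3 then -x3 else x3) - (if b5 then -x5 else x5) - (if b6 then -x6 else x6) = 1 := by
      linear_combination hb3 + r3 + r5 + r6
    simp only [pairIff]
    exact ycore _ _ _ _ _ _ m1 m2 m3 m4 m5 m6 g0 g1 g2 g3
  obtain ⟨v, h1, h2, h3, h4, h5, h6⟩ := key
  exact ⟨v, forallE _ ⟨h1, h2, h3, h4, h5, h6⟩⟩
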